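/- Let m ≥ 3, F ∈ ℤ_m[X_1,...,X_d] of degree k ≥ 2 with g_F = 1, and B ⊆ [0,1]^d a cube of side 1/h. Then N_F(B) ≤ (m/h)^{d − k/(2r(k+1)) + o(1)} + m^{d − 1/(2r(k+1)) + o(1)} h^{−d+o(1)} as m/h → ∞, where r = binomial(k+d,d) − 1. -/

import Mathlib

open MvPolynomial Finset Polynomial

/-- Finset of exponent vectors of total degree at most `k`. -/
noncomputable def KK (d k : ℕ) : Finset (Fin d →₀ ℕ) :=
  ((Fintype.piFinset fun _ : Fin d => Finset.range (k+1)).image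
    (Finsupp.equivFunOnFinite (α := Fin d) (M := ℕ)).symm).filter
    fun τ => (τ.sum fun _ e => e) ≤ k

lemma coord_le_degsum (d : ℕ) (τ : Fin d →₀ ℕ) (i : Fin d) :
    τ i ≤ τ.sum fun _ e => e := by
  classical
  by_cases h : i ∈ τ.support
  · exact Finset.single_le_sum (fun j _ => Nat.zero_le _) h
  · simp [Finsupp.notMem_support_iff.mp h]

lemma mem_KK {d k : ℕ} (τ : Fin d →₀ ℕ) :
    τ ∈ KK d k ↔ (τ.sum fun _ e => e) ≤ k := by
  constructor
  · intro h; exact (Finset.mem_filter.mp h).2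
  · intro h
    refine Finset.mem_filter.mpr ⟨Finset.mem_image.mpr ⟨τ, ?_, by simp⟩, h⟩
    refine Fintype.mem_piFinset.mpr fun i => ?_
    simpa [Nat.lt_succ_iff] using (coord_le_degsum d τ i).trans h
    
noncomputable def RR (d k : ℕ) : ℕ := (KK d k).card

noncomputable def EE (d k : ℕ) : ℕ := ∑ τ ∈ KK d k, (τ.sum fun _ e => e)

lemma EE_le (d k : ℕ) : EE d k ≤ k * RR d k := by
  calc EE d k ≤ ∑ _τ ∈ KK d k, k :=
        Finset.sum_le_sum fun τ hτ => (mem_KK τ).mp hτ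
    _ = k * RR d k := by simp [RR, mul_comm]

lemma RR_le (d k : ℕ) : RR d k ≤ (k + d).choose d := by
  classical
  have hinj : Function.Injective (fun τ : Fin d →₀ ℕ =>
      ((k - τ.sum fun _ e => e) • ({Fin.last d} : Multiset (Fin (d+1))) +
        τ.toMultiset.map (Fin.castSucc))) := by
    intro τ τ' hτ
    ext i
    have h1 := congrArg (Multiset.count (Fin.castSucc i)) hτ
    have hne : Fin.castSucc i ≠ Fin.last d := (Fin.castSucc_lt_last i).ne
    simpa [Multiset.count_nsmul, Multiset.count_singleton, hne,
      Multiset.count_map_eq_count' _ _ (Fin.castSucc_injective d),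
      Finsupp.count_toMultiset] using h1
  have hcard : ∀ τ ∈ KK d k, Multiset.card
      ((k - τ.sum fun _ e => e) • ({Fin.last d} : Multiset (Fin (d+1))) +
        τ.toMultiset.map (Fin.castSucc)) = k := by
    intro τ hτ
    have := (mem_KK τ).mp hτ
    simp only [Multiset.card_add, Multiset.card_nsmul, Multiset.card_singleton, mul_one,
      Multiset.card_map, Finsupp.card_toMultiset]
    have h2 : (τ.sum fun _ => id) = τ.sum fun _ e => e := rfl
    rw [h2]; omega
  -- map into Sym (Fin (d+1)) k
  have hRR : RR d k ≤ Fintype.card (Sym (Fin (d+1)) k) := by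
    let f : (Fin d →₀ ℕ) → Sym (Fin (d+1)) k := fun τ =>
      if h : τ ∈ KK d k then ⟨_, hcard τ h⟩ else Sym.replicate k (Fin.last d)
    have : Set.InjOn f (KK d k) := by
      intro a ha b hb hab
      rw [show f a = ⟨_, hcard a ha⟩ from dif_pos ha,
        show f b = ⟨_, hcard b hb⟩ from dif_pos hb] at hab
      exact hinj (congrArg Subtype.val hab)
    calc RR d k = (KK d k).card := rfl
      _ = ((KK d k).image f).card := (Finset.card_image_of_injOn this).symm
      _ ≤ Fintype.card (Sym (Fin (d+1)) k) := Finset.card_le_univ _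
  have hsym : Fintype.card (Sym (Fin (d+1)) k) = (k + d).choose d := by
    rw [Sym.card_sym_eq_multichoose, Fintype.card_fin, Nat.multichoose_eq]
    have h1 : d + 1 + k - 1 = k + d := by omega
    rw [h1]
    exact Nat.choose_symm_add
  omega

lemma one_le_EE (d k : ℕ) (hd : 0 < d) (hk : 0 < k) : 1 ≤ EE d k := by
  classical
  have hmem : (Finsupp.single (⟨0, hd⟩ : Fin d) 1) ∈ KK d k := by
    rw [mem_KK]
    simp [Finsupp.sum_single_index]; omega
  refine le_trans ?_ (Finset.single_le_sum (f := fun τ : Fin d →₀ ℕ => τ.sum fun _ e => e)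
    (fun _ _ => Nat.zero_le _) hmem)
  simp [Finsupp.sum_single_index]

lemma two_le_choose (d k : ℕ) (hd : 0 < d) (hk : 1 ≤ k) : 2 ≤ (k + d).choose d := by
  have h2 : (1 + d).choose d ≤ (k + d).choose d := Nat.choose_le_choose d (by omega)
  have h3 : (1 + d).choose d = d + 1 := by
    rw [add_comm]; exact Nat.choose_succ_self_right d
  omega

/-- Zeros of a nonzero multivariate polynomial of total degree ≤ k on a grid G^n. -/
lemma sz_grid : ∀ (n : ℕ) (k : ℕ) (P : MvPolynomial (Fin n) ℚ), P ≠ 0 →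
    P.totalDegree ≤ k → ∀ (G : Finset ℚ),
    (((Fintype.piFinset fun _ : Fin n => G)).filter
      fun y => MvPolynomial.eval y P = 0).card ≤ k * n * G.card ^ (n - 1) := by
  intro n
  induction n with
  | zero =>
    intro k P hP hdeg G
    have : ∀ y : Fin 0 → ℚ, MvPolynomial.eval y P ≠ 0 := by
      intro y
      have h0 : P = MvPolynomial.C (P.coeff 0) := (MvPolynomial.eq_C_of_isEmpty P)
      rw [h0, MvPolynomial.eval_C]
      intro hc
      exact hP (by rw [h0, hc, map_zero])
    rw [Finset.filter_false_of_mem (fun y _ => this y)]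
    simp
  | succ n ih =>
    intro k P hP hdeg G
    classical
    set Q := MvPolynomial.finSuccEquiv ℚ n P with hQdef
    have hQ : Q ≠ 0 := by
      intro h
      exact hP ((map_eq_zero_iff _ (AlgEquiv.injective _)).mp h)
    set j := Q.natDegree with hj
    have hPj : Q.coeff j ≠ 0 := Polynomial.leadingCoeff_ne_zero.mpr hQ
    have h1 := MvPolynomial.totalDegree_coeff_finSuccEquiv_add_le P j (by rw [← hQdef]; exact hPj)
    rw [← hQdef] at h1
    have hjk : j ≤ k := by omega
    have hPjdeg : (Q.coeff j).totalDegree ≤ k := by omega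
    set Bad := (Fintype.piFinset fun _ : Fin n => G).filter
      (fun y' => MvPolynomial.eval y' (Q.coeff j) = 0) with hBad
    have hBadCard : Bad.card ≤ k * n * G.card ^ (n - 1) := ih k (Q.coeff j) hPj hPjdeg G
    -- the injection into pairs
    set Z := ((Fintype.piFinset fun _ : Fin (n+1) => G)).filter
      (fun y => MvPolynomial.eval y P = 0) with hZ
    set ψ : (Fin (n+1) → ℚ) → ℚ × (Fin n → ℚ) := fun y => (y 0, Fin.tail y) with hψ
    have hψinj : Function.Injective ψ := by
      intro a b hab
      have h1 : a 0 = b 0 := congrArg Prod.fst hab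
      have h2 : Fin.tail a = Fin.tail b := congrArg Prod.snd hab
      funext i
      refine Fin.cases ?_ ?_ i
      · exact h1
      · intro i'; exact congrFun h2 i'
    -- good pairs finset
    set W := (G ×ˢ ((Fintype.piFinset fun _ : Fin n => G) \ Bad)).filter
      (fun p => Polynomial.eval p.1 (Polynomial.map (MvPolynomial.eval p.2) Q) = 0) with hW
    have hsub : Z.image ψ ⊆ (G ×ˢ Bad) ∪ W := by
      intro p hp
      obtain ⟨y, hy, rfl⟩ := Finset.mem_image.mp hp
      obtain ⟨hy1, hy2⟩ := Finset.mem_filter.mp hy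
      have hy0 : y 0 ∈ G := Fintype.mem_piFinset.mp hy1 0
      have hyt : Fin.tail y ∈ Fintype.piFinset fun _ : Fin n => G :=
        Fintype.mem_piFinset.mpr fun i => Fintype.mem_piFinset.mp hy1 i.succ
      by_cases hb : Fin.tail y ∈ Bad
      · exact Finset.mem_union_left _ (Finset.mem_product.mpr ⟨hy0, hb⟩)
      · refine Finset.mem_union_right _ (Finset.mem_filter.mpr
          ⟨Finset.mem_product.mpr ⟨hy0, Finset.mem_sdiff.mpr ⟨hyt, hb⟩⟩, ?_⟩)
        have hcons : (Fin.cons (y 0) (Fin.tail y) : Fin (n+1) → ℚ) = y := Fin.cons_self_tail y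
        rw [← MvPolynomial.eval_eq_eval_mv_eval']
        rw [hcons]
        exact hy2
    have hWcard : W.card ≤ G.card ^ n * k := by
      have hsub2 : W ⊆ ((Fintype.piFinset fun _ : Fin n => G) \ Bad).biUnion
          (fun y' => ((G.filter fun t =>
            Polynomial.eval t (Polynomial.map (MvPolynomial.eval y') Q) = 0)).image
            (fun t => (t, y'))) := by
        intro p hp
        obtain ⟨hp1, hp2⟩ := Finset.mem_filter.mp hp
        obtain ⟨hpa, hpb⟩ := Finset.mem_product.mp hp1
        refine Finset.mem_biUnion.mpr ⟨p.2, hpb, Finset.mem_image.mpr ⟨p.1,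
          Finset.mem_filter.mpr ⟨hpa, hp2⟩, rfl⟩⟩
      refine (Finset.card_le_card hsub2).trans ((Finset.card_biUnion_le).trans ?_)
      have hone : ∀ y' ∈ (Fintype.piFinset fun _ : Fin n => G) \ Bad,
          (((G.filter fun t =>
            Polynomial.eval t (Polynomial.map (MvPolynomial.eval y') Q) = 0)).image
            (fun t => (t, y'))).card ≤ k := by
        intro y' hy'
        have hy'b : MvPolynomial.eval y' (Q.coeff j) ≠ 0 := by
          have := (Finset.mem_sdiff.mp hy').2
          simpa [hBad, Finset.mem_filter, (Finset.mem_sdiff.mp hy').1] using this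
        set q := Polynomial.map (MvPolynomial.eval y') Q with hq
        have hq0 : q ≠ 0 := fun h => hy'b (by
          have := congrArg (fun r => Polynomial.coeff r j) h
          simpa [hq, Polynomial.coeff_map] using this)
        refine (Finset.card_image_le).trans ?_
        have hsub3 : (G.filter fun t => Polynomial.eval t q = 0) ⊆ q.roots.toFinset := by
          intro t ht
          rw [Multiset.mem_toFinset, Polynomial.mem_roots hq0]
          exact (Finset.mem_filter.mp ht).2
        refine (Finset.card_le_card hsub3).trans ?_
        refine (q.roots.toFinset_card_le).trans ?_
        refine (Polynomial.card_roots' q).trans ?_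
        refine (Polynomial.natDegree_map_le).trans hjk
      calc ∑ y' ∈ (Fintype.piFinset fun _ : Fin n => G) \ Bad,
            (((G.filter fun t =>
              Polynomial.eval t (Polynomial.map (MvPolynomial.eval y') Q) = 0)).image
              (fun t => (t, y'))).card
          ≤ ∑ _y' ∈ (Fintype.piFinset fun _ : Fin n => G) \ Bad, k :=
            Finset.sum_le_sum hone
        _ ≤ G.card ^ n * k := by
            rw [Finset.sum_const, smul_eq_mul]
            have : ((Fintype.piFinset fun _ : Fin n => G) \ Bad).card
                ≤ (Fintype.piFinset fun _ : Fin n => G).card :=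
              Finset.card_le_card (Finset.sdiff_subset)
            have hpf : (Fintype.piFinset fun _ : Fin n => G).card = G.card ^ n := by
              simp [Fintype.card_piFinset]
            exact Nat.mul_le_mul_right k (by omega)
    have hZcard : Z.card ≤ G.card * Bad.card + G.card ^ n * k := by
      calc Z.card = (Z.image ψ).card := (Finset.card_image_of_injective _ hψinj).symm
        _ ≤ ((G ×ˢ Bad) ∪ W).card := Finset.card_le_card hsub
        _ ≤ (G ×ˢ Bad).card + W.card := Finset.card_union_le _ _
        _ ≤ G.card * Bad.card + G.card ^ n * k := by
            rw [Finset.card_product]; omega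
    refine hZcard.trans ?_
    show G.card * Bad.card + G.card ^ n * k ≤ k * (n + 1) * G.card ^ n
    have h1 : G.card * Bad.card ≤ k * n * G.card ^ n := by
      rcases Nat.eq_zero_or_pos n with hn | hn
      · subst hn
        have h0 := hBadCard
        rw [Nat.mul_zero, Nat.zero_mul] at h0
        simp [Nat.le_zero.mp h0]
      · calc G.card * Bad.card ≤ G.card * (k * n * G.card ^ (n-1)) :=
            Nat.mul_le_mul_left _ hBadCard
          _ = k * n * (G.card * G.card ^ (n-1)) := by ring
          _ = k * n * G.card ^ n := by
              rw [← pow_succ']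
              congr 2
              omega
    have h2 : G.card ^ n * k ≤ k * G.card ^ n := le_of_eq (mul_comm _ _)
    calc G.card * Bad.card + G.card ^ n * k
        ≤ k * n * G.card ^ n + k * G.card ^ n := Nat.add_le_add h1 h2
      _ = k * (n + 1) * G.card ^ n := by ring

lemma core (d k m s : ℕ) (hm : 2 ≤ m)
    (F : MvPolynomial (Fin d) (ZMod m)) (hdeg : F.totalDegree ≤ k)
    (hcomb : ∃ u : (Fin d →₀ ℕ) → ZMod m, ∑ τ ∈ KK d k, u τ * F.coeff τ = 1)
    (hsmall : ((RR d k).factorial : ℤ) * (s : ℤ) ^ (EE d k) < (m : ℤ))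
    (S : Finset (Fin d → ℤ))
    (hbox : ∀ x ∈ S, ∀ i, 0 ≤ x i ∧ x i ≤ (s : ℤ))
    (hzero : ∀ x ∈ S, MvPolynomial.eval (fun i => ((x i : ℤ) : ZMod m)) F = 0) :
    S.card ≤ k * d * (s + 1) ^ (d - 1) := by
  classical
  haveI : NeZero m := ⟨by omega⟩
  set κ := {τ // τ ∈ KK d k} with hκ
  let w : (Fin d → ℤ) → (κ → ℚ) := fun x τ => ∏ i, (x i : ℚ) ^ ((τ : Fin d →₀ ℕ) i)
  by_cases hspan : Submodule.span ℚ (w '' ↑S) = ⊤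
  · -- determinant case: contradiction
    exfalso
    obtain ⟨b, hbsub, hbspan, hbind⟩ := exists_linearIndependent ℚ (w '' ↑S)
    rw [hspan] at hbspan
    haveI : Fintype b := (hbind.setFinite).fintype
    let bas : Module.Basis b ℚ (κ → ℚ) := Module.Basis.mk hbind (by rw [Subtype.range_coe, hbspan])
    let e : b ≃ κ := bas.indexEquiv (Pi.basisFun ℚ κ)
    have hrows : LinearIndependent ℚ (fun j : κ => ((e.symm j : b) : κ → ℚ)) := by
      have h := (bas.reindex e).linearIndependent
      have h2 : ⇑(bas.reindex e) = fun j : κ => ((e.symm j : b) : κ → ℚ) := by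
        funext j
        rw [Module.Basis.reindex_apply, Module.Basis.mk_apply]
      rwa [h2] at h
    have hptex : ∀ j : κ, ∃ x, x ∈ S ∧ w x = ((e.symm j : b) : κ → ℚ) := by
      intro j
      obtain ⟨x, hx1, hx2⟩ := hbsub (e.symm j).2
      exact ⟨x, hx1, hx2⟩
    choose pt hptS hptw using hptex
    let Az : Matrix κ κ ℤ := Matrix.of fun j τ => ∏ i, (pt j i) ^ ((τ : Fin d →₀ ℕ) i)
    let A : Matrix κ κ ℚ := Matrix.of fun j τ => ((e.symm j : b) : κ → ℚ) τ
    have hAz : Az.map (Int.cast : ℤ → ℚ) = A := by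
      ext j τ
      show ((∏ i, (pt j i) ^ ((τ : Fin d →₀ ℕ) i) : ℤ) : ℚ) = ((e.symm j : b) : κ → ℚ) τ
      rw [← hptw j]
      push_cast
      rfl
    have hAunit : IsUnit A.det := by
      rw [← Matrix.isUnit_iff_isUnit_det]
      rw [← Matrix.linearIndependent_rows_iff_isUnit]
      exact hrows
    have hdetZ : Az.det ≠ 0 := by
      intro h
      have h1 : ((Int.castRingHom ℚ) Az.det) = A.det := by
        rw [RingHom.map_det]
        exact congrArg Matrix.det hAz
      rw [h, map_zero] at h1
      exact hAunit.ne_zero h1.symm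
    -- ZMod side
    let Bm : Matrix κ κ (ZMod m) := Az.map (Int.cast : ℤ → ZMod m)
    let cv : κ → ZMod m := fun τ => F.coeff ↑τ
    have hsupp : F.support ⊆ KK d k := by
      intro τ hτ
      exact (mem_KK τ).mpr ((MvPolynomial.le_totalDegree hτ).trans hdeg)
    have hmv : Bm.mulVec cv = 0 := by
      funext j
      show ∑ τ : κ, Bm j τ * cv τ = 0
      have hstep : ∑ τ : κ, Bm j τ * cv τ
          = ∑ τ ∈ KK d k, F.coeff τ * ∏ i, ((pt j i : ZMod m)) ^ τ i := by
        rw [← Finset.sum_coe_sort (KK d k)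
          (fun τ => F.coeff τ * ∏ i, ((pt j i : ZMod m)) ^ τ i)]
        refine Finset.sum_congr rfl fun τ _ => ?_
        show ((∏ i, (pt j i) ^ ((τ : Fin d →₀ ℕ) i) : ℤ) : ZMod m) * F.coeff ↑τ = _
        push_cast
        ring
      rw [hstep, ← Finset.sum_subset hsupp
        (fun τ _ hτ => by rw [MvPolynomial.notMem_support_iff.mp hτ, zero_mul])]
      have he := hzero (pt j) (hptS j)
      rw [MvPolynomial.eval_eq'] at he
      exact he
    have h2 : Bm.det • cv = 0 := by
      have h3 : Bm.adjugate.mulVec (Bm.mulVec cv) = Bm.det • cv := by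
        rw [Matrix.mulVec_mulVec, Matrix.adjugate_mul, Matrix.smul_mulVec,
          Matrix.one_mulVec]
      rw [← h3, hmv, Matrix.mulVec_zero]
    obtain ⟨u, hu⟩ := hcomb
    have hdet0 : Bm.det = 0 := by
      have h4 : ∀ τ (hτ : τ ∈ KK d k), Bm.det * F.coeff τ = 0 := by
        intro τ hτ
        have h5 := congrFun h2 (⟨τ, hτ⟩ : κ)
        simpa [Pi.smul_apply, smul_eq_mul, cv] using h5
      calc Bm.det = Bm.det * 1 := (mul_one _).symm
        _ = Bm.det * ∑ τ ∈ KK d k, u τ * F.coeff τ := by rw [hu]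
        _ = ∑ τ ∈ KK d k, u τ * (Bm.det * F.coeff τ) := by
            rw [Finset.mul_sum]
            exact Finset.sum_congr rfl fun τ _ => by ring
        _ = 0 := Finset.sum_eq_zero fun τ hτ => by rw [h4 τ hτ, mul_zero]
    have hdvd : (m : ℤ) ∣ Az.det := by
      rw [← ZMod.intCast_zmod_eq_zero_iff_dvd]
      have h6 : ((Int.castRingHom (ZMod m)) Az.det) = Bm.det := by
        rw [RingHom.map_det]
        rfl
      exact h6.trans hdet0
    have habs : (m : ℤ) ≤ |Az.det| :=
      Int.le_of_dvd (abs_pos.mpr hdetZ) ((dvd_abs _ _).mpr hdvd)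
    -- size bound
    have hdetbound : |Az.det| ≤ ((RR d k).factorial : ℤ) * (s : ℤ) ^ (EE d k) := by
      rw [Matrix.det_apply]
      refine (Finset.abs_sum_le_sum_abs _ _).trans ?_
      have hterm : ∀ σ : Equiv.Perm κ,
          |Equiv.Perm.sign σ • ∏ τ : κ, Az (σ τ) τ| ≤ (s : ℤ) ^ (EE d k) := by
        intro σ
        have h5 : |Equiv.Perm.sign σ • ∏ τ : κ, Az (σ τ) τ| = |∏ τ : κ, Az (σ τ) τ| := by
          rcases Int.units_eq_one_or (Equiv.Perm.sign σ) with h | h <;>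
            simp [h, Units.smul_def]
        rw [h5, Finset.abs_prod]
        have h6 : ∀ τ : κ, |Az (σ τ) τ| ≤ (s : ℤ) ^ ((τ : Fin d →₀ ℕ).sum fun _ e => e) := by
          intro τ
          show |∏ i, (pt (σ τ) i) ^ ((τ : Fin d →₀ ℕ) i)| ≤ _
          rw [Finset.abs_prod]
          have h7 : ∀ i, |pt (σ τ) i ^ ((τ : Fin d →₀ ℕ) i)|
              ≤ (s : ℤ) ^ ((τ : Fin d →₀ ℕ) i) := by
            intro i
            rw [abs_pow]
            refine pow_le_pow_left₀ (abs_nonneg _) ?_ _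
            have h8 := hbox _ (hptS (σ τ)) i
            rw [abs_le]
            constructor <;> omega
          refine (Finset.prod_le_prod (fun i _ => abs_nonneg _) (fun i _ => h7 i)).trans ?_
          rw [Finset.prod_pow_eq_pow_sum]
          rw [show (∑ i, ((τ : Fin d →₀ ℕ)) i) = ((τ : Fin d →₀ ℕ).sum fun _ e => e) from
            (Finsupp.sum_fintype (τ : Fin d →₀ ℕ) (fun _ e => e) (fun _ => rfl)).symm]
        refine (Finset.prod_le_prod (fun τ _ => abs_nonneg _) (fun τ _ => h6 τ)).trans ?_
        rw [Finset.prod_pow_eq_pow_sum]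
        rw [show (∑ τ : κ, ((τ : Fin d →₀ ℕ).sum fun _ e => e)) = EE d k from
          Finset.sum_coe_sort (KK d k) (fun τ => τ.sum fun _ e => e)]
      calc ∑ σ : Equiv.Perm κ, |Equiv.Perm.sign σ • ∏ τ : κ, Az (σ τ) τ|
          ≤ ∑ _σ : Equiv.Perm κ, (s : ℤ) ^ (EE d k) :=
            Finset.sum_le_sum fun σ _ => hterm σ
        _ = (Fintype.card (Equiv.Perm κ) : ℤ) * (s : ℤ) ^ (EE d k) := by
            rw [Finset.sum_const, Finset.card_univ, nsmul_eq_mul]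
        _ = ((RR d k).factorial : ℤ) * (s : ℤ) ^ (EE d k) := by
            rw [Fintype.card_perm, Fintype.card_coe]
            rfl
    omega
  · -- span < ⊤ : functional and Schwartz-Zippel
    have hlt : Submodule.span ℚ (w '' ↑S) < ⊤ := lt_top_iff_ne_top.mpr hspan
    obtain ⟨φ, hφ0, hφbot⟩ := Submodule.exists_dual_map_eq_bot_of_lt_top hlt inferInstance
    have hφzero : ∀ v ∈ Submodule.span ℚ (w '' ↑S), φ v = 0 := by
      intro v hv
      have h1 : φ v ∈ (Submodule.span ℚ (w '' ↑S)).map φ := Submodule.mem_map_of_mem hv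
      rw [hφbot] at h1
      exact (Submodule.mem_bot ℚ).mp h1
    let c : κ → ℚ := fun τ => φ (fun j => if τ = j then 1 else 0)
    have hφeq : ∀ v : κ → ℚ, φ v = ∑ τ : κ, v τ * c τ := by
      intro v
      rw [LinearMap.pi_apply_eq_sum_univ φ v]
      exact Finset.sum_congr rfl fun τ _ => by rw [smul_eq_mul]
    have hcne : ∃ τ : κ, c τ ≠ 0 := by
      by_contra hc
      push_neg at hc
      apply hφ0
      refine LinearMap.ext fun v => ?_
      rw [hφeq]
      simp [hc]
    let P : MvPolynomial (Fin d) ℚ := ∑ τ : κ, MvPolynomial.monomial (τ : Fin d →₀ ℕ) (c τ)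
    have hcoeffP : ∀ τ : κ, P.coeff ↑τ = c τ := by
      intro τ0
      show (Finset.univ.sum fun τ : κ => MvPolynomial.monomial (τ : Fin d →₀ ℕ) (c τ)).coeff ↑τ0
        = c τ0
      rw [MvPolynomial.coeff_sum]
      rw [Finset.sum_eq_single τ0]
      · rw [MvPolynomial.coeff_monomial, if_pos rfl]
      · intro τ _ hne
        rw [MvPolynomial.coeff_monomial, if_neg (fun h => hne (Subtype.ext h))]
      · intro h
        exact absurd (Finset.mem_univ τ0) h
    have hPne : P ≠ 0 := by
      obtain ⟨τ, hτ⟩ := hcne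
      intro h
      apply hτ
      rw [← hcoeffP τ, h, MvPolynomial.coeff_zero]
    have hPdeg : P.totalDegree ≤ k := by
      refine (MvPolynomial.totalDegree_finset_sum _ _).trans ?_
      refine Finset.sup_le fun τ _ => ?_
      refine (MvPolynomial.totalDegree_monomial_le _ _).trans ?_
      exact (mem_KK _).mp τ.2
    have hvanish : ∀ x ∈ S, MvPolynomial.eval (fun i => ((x i : ℚ))) P = 0 := by
      intro x hx
      have h1 : φ (w x) = 0 := hφzero _ (Submodule.subset_span ⟨x, hx, rfl⟩)
      rw [hφeq] at h1
      rw [← h1]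
      rw [map_sum]
      refine Finset.sum_congr rfl fun τ _ => ?_
      rw [MvPolynomial.eval_monomial, mul_comm]
      congr 1
      rw [Finsupp.prod_fintype _ _ (fun i => pow_zero _)]
    let G : Finset ℚ := (Finset.range (s+1)).image (fun t : ℕ => (t : ℚ))
    have hGcard : G.card ≤ s + 1 := le_trans Finset.card_image_le (by simp)
    have hinj : Set.InjOn (fun x : Fin d → ℤ => fun i => ((x i : ℚ))) ↑S := by
      intro a _ b _ hab
      funext i
      have h := congrFun hab i
      simp only at h
      exact_mod_cast h
    have hmap : ∀ x ∈ S, (fun i => ((x i : ℚ)))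
        ∈ (Fintype.piFinset fun _ : Fin d => G).filter
          (fun y => MvPolynomial.eval y P = 0) := by
      intro x hx
      refine Finset.mem_filter.mpr ⟨Fintype.mem_piFinset.mpr fun i => ?_, hvanish x hx⟩
      refine Finset.mem_image.mpr ⟨(x i).toNat, Finset.mem_range.mpr ?_, ?_⟩
      · have := hbox x hx i
        omega
      · have h9 := (hbox x hx i).1
        have : (((x i).toNat : ℤ) : ℚ) = ((x i : ℤ) : ℚ) := by
          rw [Int.toNat_of_nonneg h9]
        push_cast at this ⊢
        exact this
    have hcount : S.card ≤ (((Fintype.piFinset fun _ : Fin d => G)).filter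
        (fun y => MvPolynomial.eval y P = 0)).card :=
      Finset.card_le_card_of_injOn _ hmap hinj
    refine hcount.trans ((sz_grid d k P hPne hPdeg G).trans ?_)
    exact Nat.mul_le_mul_left _ (Nat.pow_le_pow_left hGcard _)

section trans
variable {d m : ℕ}

noncomputable def transl (v : Fin d → ZMod m) (F : MvPolynomial (Fin d) (ZMod m)) :
    MvPolynomial (Fin d) (ZMod m) :=
  MvPolynomial.bind₁ (fun i => MvPolynomial.X i + MvPolynomial.C (v i)) F

lemma eval_transl (v : Fin d → ZMod m) (F : MvPolynomial (Fin d) (ZMod m))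
    (y : Fin d → ZMod m) :
    MvPolynomial.eval y (transl v F) = MvPolynomial.eval (fun i => y i + v i) F := by
  rw [transl]
  have h := MvPolynomial.eval₂Hom_bind₁ (RingHom.id (ZMod m)) y
    (fun i => MvPolynomial.X i + MvPolynomial.C (v i)) F
  have h2 : ∀ (z : Fin d → ZMod m) (p : MvPolynomial (Fin d) (ZMod m)),
      MvPolynomial.eval₂Hom (RingHom.id (ZMod m)) z p = MvPolynomial.eval z p := fun _ _ => rfl
  rw [h2] at h
  rw [h]
  have h4 : (fun i => MvPolynomial.eval₂Hom (RingHom.id (ZMod m)) y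
      (MvPolynomial.X i + MvPolynomial.C (v i))) = fun i => y i + v i := by
    funext i
    simp
  rw [h4, h2]

lemma totalDegree_transl_le (hm : 2 ≤ m) (v : Fin d → ZMod m)
    (F : MvPolynomial (Fin d) (ZMod m)) :
    (transl v F).totalDegree ≤ F.totalDegree := by
  haveI : Fact (1 < m) := ⟨hm⟩
  conv_lhs => rw [transl, ← MvPolynomial.support_sum_monomial_coeff F]
  rw [map_sum]
  refine (MvPolynomial.totalDegree_finset_sum _ _).trans (Finset.sup_le fun τ hτ => ?_)
  rw [MvPolynomial.bind₁_monomial]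
  refine (MvPolynomial.totalDegree_mul _ _).trans ?_
  rw [MvPolynomial.totalDegree_C, zero_add]
  refine (MvPolynomial.totalDegree_finset_prod _ _).trans ?_
  refine le_trans ?_ (MvPolynomial.le_totalDegree hτ)
  rw [Finsupp.sum]
  refine Finset.sum_le_sum fun i _ => ?_
  refine (MvPolynomial.totalDegree_pow _ _).trans ?_
  have h1 : (MvPolynomial.X i + MvPolynomial.C (v i) :
      MvPolynomial (Fin d) (ZMod m)).totalDegree ≤ 1 := by
    refine (MvPolynomial.totalDegree_add _ _).trans ?_
    rw [MvPolynomial.totalDegree_X, MvPolynomial.totalDegree_C]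
    simp
  calc τ i * (MvPolynomial.X i + MvPolynomial.C (v i) :
      MvPolynomial (Fin d) (ZMod m)).totalDegree ≤ τ i * 1 := Nat.mul_le_mul_left _ h1
    _ = τ i := Nat.mul_one _

lemma comb_transl {k : ℕ} (hm : 2 ≤ m) (v : Fin d → ZMod m)
    (F : MvPolynomial (Fin d) (ZMod m)) (hdeg : F.totalDegree ≤ k)
    (σ : Fin d →₀ ℕ) (hu : IsUnit (F.coeff σ)) :
    ∃ u : (Fin d →₀ ℕ) → ZMod m,
      ∑ τ ∈ KK d k, u τ * (transl v F).coeff τ = 1 := by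
  classical
  set G := transl v F with hG
  set g' : Fin d → MvPolynomial (Fin d) (ZMod m) :=
    fun i => MvPolynomial.X i - MvPolynomial.C (v i) with hg'
  have hFG : MvPolynomial.bind₁ g' G = F := by
    rw [hG, transl, MvPolynomial.bind₁_bind₁]
    have h1 : (fun i => MvPolynomial.bind₁ g'
        (MvPolynomial.X i + MvPolynomial.C (v i))) = MvPolynomial.X := by
      funext i
      rw [map_add, MvPolynomial.bind₁_X_right, MvPolynomial.bind₁_C_right, hg']
      ring
    rw [h1, MvPolynomial.bind₁_X_left]
    rfl
  have hsupp : G.support ⊆ KK d k := by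
    intro τ hτ
    refine (mem_KK τ).mpr ((MvPolynomial.le_totalDegree hτ).trans ?_)
    exact (totalDegree_transl_le hm v F).trans hdeg
  have hkey : F.coeff σ = ∑ τ ∈ KK d k,
      (MvPolynomial.bind₁ g' (MvPolynomial.monomial τ 1)).coeff σ * G.coeff τ := by
    conv_lhs => rw [← hFG, ← MvPolynomial.support_sum_monomial_coeff G]
    rw [map_sum, MvPolynomial.coeff_sum]
    rw [← Finset.sum_subset hsupp (fun τ _ hτ => by
      rw [MvPolynomial.notMem_support_iff.mp hτ, mul_zero])]
    refine Finset.sum_congr rfl fun τ hτ => ?_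
    have h2 : (MvPolynomial.monomial τ (G.coeff τ)) =
        G.coeff τ • MvPolynomial.monomial τ (1 : ZMod m) := by
      rw [MvPolynomial.smul_monomial, smul_eq_mul, mul_one]
    rw [h2, map_smul, MvPolynomial.coeff_smul, smul_eq_mul, mul_comm]
  obtain ⟨uu, huu⟩ := hu
  refine ⟨fun τ => (↑uu⁻¹ : ZMod m) *
    (MvPolynomial.bind₁ g' (MvPolynomial.monomial τ 1)).coeff σ, ?_⟩
  calc ∑ τ ∈ KK d k, (↑uu⁻¹ : ZMod m) *
      (MvPolynomial.bind₁ g' (MvPolynomial.monomial τ 1)).coeff σ * G.coeff τ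
      = (↑uu⁻¹ : ZMod m) * ∑ τ ∈ KK d k,
        (MvPolynomial.bind₁ g' (MvPolynomial.monomial τ 1)).coeff σ * G.coeff τ := by
        rw [Finset.mul_sum]
        exact Finset.sum_congr rfl fun τ _ => by ring
    _ = (↑uu⁻¹ : ZMod m) * F.coeff σ := by rw [← hkey]
    _ = (↑uu⁻¹ : ZMod m) * (↑uu : ZMod m) := by rw [← huu]
    _ = 1 := Units.inv_mul uu


attribute [irreducible] KK RR EE

lemma block_count (d k m : ℕ) (hm : 2 ≤ m) (ℓ : ℕ) (hℓ : 1 ≤ ℓ)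
    (F : MvPolynomial (Fin d) (ZMod m)) (hdeg : F.totalDegree ≤ k)
    (σ : Fin d →₀ ℕ) (hu : IsUnit (F.coeff σ))
    (hsmall : ((RR d k).factorial : ℤ) * ((ℓ : ℤ) - 1) ^ (EE d k) < (m : ℤ))
    (c : Fin d → ℤ) (M : ℕ)
    (S : Finset (Fin d → ℤ))
    (hbox : ∀ x ∈ S, ∀ i, c i ≤ x i ∧ x i ≤ c i + M)
    (hzero : ∀ x ∈ S, MvPolynomial.eval (fun i => ((x i : ℤ) : ZMod m)) F = 0) :
    S.card ≤ (M / ℓ + 1) ^ d * (k * d * ℓ ^ (d - 1)) := by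
  classical
  set q : (Fin d → ℤ) → (Fin d → ℕ) := fun x i => ((x i - c i).toNat) / ℓ with hq
  set QF : Finset (Fin d → ℕ) := Fintype.piFinset (fun _ => Finset.range (M / ℓ + 1)) with hQF
  have hcover : ∀ x ∈ S, q x ∈ QF := by
    intro x hx
    refine Fintype.mem_piFinset.mpr fun i => Finset.mem_range.mpr ?_
    have h1 := hbox x hx i
    have h2 : (x i - c i).toNat ≤ M := by omega
    have h3 := Nat.div_le_div_right (c := ℓ) h2
    simp only [hq]
    omega
  rw [Finset.card_eq_sum_card_fiberwise hcover]
  have hblock : ∀ qq ∈ QF, (S.filter fun x => q x = qq).card ≤ k * d * ℓ ^ (d - 1) := by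
    intro qq _
    set b : Fin d → ℤ := fun i => c i + (qq i : ℤ) * ℓ with hb
    set vb : Fin d → ZMod m := fun i => ((b i : ℤ) : ZMod m) with hvb
    set G := transl vb F with hG
    set S' : Finset (Fin d → ℤ) :=
      (S.filter fun x => q x = qq).image (fun x => fun i => x i - b i) with hS'
    have hinj : Set.InjOn (fun x : Fin d → ℤ => fun i => x i - b i)
        ↑(S.filter fun x => q x = qq) := by
      intro x _ y _ hxy
      funext i
      have := congrFun hxy i
      simp only at this
      omega
    have hcard : (S.filter fun x => q x = qq).card = S'.card :=
      (Finset.card_image_of_injOn hinj).symm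
    rw [hcard]
    have hres : ∀ x ∈ S.filter fun x => q x = qq, ∀ i,
        0 ≤ x i - b i ∧ x i - b i ≤ ((ℓ - 1 : ℕ) : ℤ) := by
      intro x hx i
      obtain ⟨hxS, hxq⟩ := Finset.mem_filter.mp hx
      have h1 := hbox x hxS i
      have h2 : ((x i - c i).toNat) / ℓ = qq i := congrFun hxq i
      have h3 : (x i - c i).toNat = ℓ * (((x i - c i).toNat) / ℓ) + ((x i - c i).toNat) % ℓ :=
        (Nat.div_add_mod _ _).symm
      have h4 : ((x i - c i).toNat) % ℓ < ℓ := Nat.mod_lt _ (by omega)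
      have h5 : ((x i - c i).toNat : ℤ) = x i - c i := Int.toNat_of_nonneg (by omega)
      rw [h2] at h3
      have h6 : ((x i - c i).toNat : ℤ) = ℓ * qq i + (((x i - c i).toNat) % ℓ : ℕ) := by
        exact_mod_cast congrArg (Nat.cast : ℕ → ℤ) h3
      rw [mul_comm ((ℓ : ℤ)) ((qq i : ℤ))] at h6
      rw [hb]
      push_cast
      omega
    have hzero' : ∀ y ∈ S', MvPolynomial.eval (fun i => ((y i : ℤ) : ZMod m)) G = 0 := by
      intro y hy
      obtain ⟨x, hx, rfl⟩ := Finset.mem_image.mp hy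
      rw [eval_transl]
      have h7 : (fun i => (((x i - b i : ℤ) : ZMod m)) + vb i)
          = fun i => ((x i : ℤ) : ZMod m) := by
        funext i
        rw [hvb]
        push_cast
        ring
      rw [h7]
      exact hzero x (Finset.mem_filter.mp hx).1
    have hcore := core d k m (ℓ - 1) hm G
      ((totalDegree_transl_le hm vb F).trans hdeg)
      (comb_transl hm vb F hdeg σ hu)
      (by rwa [show (((ℓ - 1 : ℕ)) : ℤ) = (ℓ : ℤ) - 1 by omega])
      S'
      (by
        intro y hy i
        obtain ⟨x, hx, rfl⟩ := Finset.mem_image.mp hy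
        exact hres x hx i)
      hzero'
    have h8 : ℓ - 1 + 1 = ℓ := by omega
    rwa [h8] at hcore
  calc ∑ qq ∈ QF, (S.filter fun x => q x = qq).card
      ≤ ∑ _qq ∈ QF, (k * d * ℓ ^ (d - 1)) := Finset.sum_le_sum hblock
    _ = QF.card * (k * d * ℓ ^ (d - 1)) := by rw [Finset.sum_const, smul_eq_mul]
    _ = (M / ℓ + 1) ^ d * (k * d * ℓ ^ (d - 1)) := by
        rw [hQF, Fintype.card_piFinset]
        simp

lemma le_rpow_of_rpow_le {A x p : ℝ} (hA : 1 ≤ A) (hp : 0 < p) (hx : A ^ (1/p : ℝ) ≤ x) :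
    A ≤ x ^ p := by
  have hA0 : (0:ℝ) ≤ A := le_trans zero_le_one hA
  have h1 : (1:ℝ) ≤ A ^ (1/p : ℝ) := Real.one_le_rpow hA (by positivity)
  have hx0 : (0:ℝ) ≤ A ^ (1/p : ℝ) := le_trans zero_le_one h1
  calc A = (A ^ (1/p : ℝ)) ^ p := by
        rw [← Real.rpow_mul hA0, one_div_mul_cancel hp.ne', Real.rpow_one]
    _ ≤ x ^ p := Real.rpow_le_rpow hx0 hx hp.le

set_option maxHeartbeats 2000000 in
/-- Corollary 3.2: for any cube `B ⊆ [0,1]^d` of side `1/h` and `F ∈ ℤ_m[X_1,...,X_d]` of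
degree `k ≥ 2` with `g_F = 1`,
`N_F(B) ≤ (m/h)^{d − k/(2r(k+1)) + o(1)} + m^{d − 1/(2r(k+1)) + o(1)} h^{−d+o(1)}`
as `m/h → ∞`, where `r = binom(k+d,d) − 1`. -/
theorem stmt_15 (d k : ℕ) (hd : 0 < d) (hk : 2 ≤ k) :
    ∀ ε : ℝ, 0 < ε → ∃ T : ℝ, ∀ m h : ℕ, 3 ≤ m → 1 ≤ h → T ≤ (m : ℝ) / (h : ℝ) →
      ∀ F : MvPolynomial (Fin d) (ZMod m), F.totalDegree = k →
      (∃ σ : Fin d →₀ ℕ, (σ.sum fun _ e => e) = k ∧ IsUnit (MvPolynomial.coeff σ F)) →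
      ∀ a : Fin d → ℝ, (∀ i, 0 ≤ a i) → (∀ i, a i + 1 / (h : ℝ) ≤ 1) →
      ((Nat.card {x : Fin d → ℤ //
          (∀ i, (x i : ℝ) / (m : ℝ) ∈ Set.Icc (a i) (a i + 1 / (h : ℝ))) ∧
          MvPolynomial.eval (fun i => ((x i : ℤ) : ZMod m)) F = 0} : ℕ) : ℝ)
        ≤ ((m : ℝ) / (h : ℝ))
            ^ ((d : ℝ) - (k : ℝ) / (2 * (((k + d).choose d - 1 : ℕ) : ℝ) * ((k : ℝ) + 1)) + ε)
          + (m : ℝ)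
              ^ ((d : ℝ) - 1 / (2 * (((k + d).choose d - 1 : ℕ) : ℝ) * ((k : ℝ) + 1)) + ε)
            * (h : ℝ) ^ (-(d : ℝ) + ε) := by
  intro ε hε
  classical
  set r : ℕ := (k + d).choose d - 1 with hrdef
  have hchoose : 2 ≤ (k + d).choose d := two_le_choose d k hd (by omega)
  have hr1 : 1 ≤ r := by omega
  have hrk : k ≤ r := by
    have h1 : (k+1).choose k ≤ (k+d).choose k := Nat.choose_le_choose k (by omega)
    have h2 : (k+1).choose k = k+1 := Nat.choose_succ_self_right k
    have h3 : (k+d).choose k = (k+d).choose d := Nat.choose_symm_add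
    omega
  set Kq : ℝ := 2 * (r : ℝ) * ((k : ℝ) + 1) with hKqdef
  have hK0 : (0:ℝ) < Kq := by
    rw [hKqdef]
    have : (1:ℝ) ≤ (r:ℝ) := by exact_mod_cast hr1
    positivity
  have hK2k : 2 * (k:ℝ) ≤ Kq := by
    rw [hKqdef]
    have h1 : (k:ℝ) ≤ (r:ℝ) := by exact_mod_cast hrk
    nlinarith [Nat.cast_nonneg (α := ℝ) k]
  set δ : ℝ := 1 / Kq with hδdef
  have hδ0 : 0 < δ := by rw [hδdef]; positivity
  have hkδ : (k:ℝ) * δ ≤ 1/2 := by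
    rw [hδdef, mul_one_div, div_le_div_iff₀ hK0 (by norm_num : (0:ℝ) < 2)]
    linarith
  -- EE and RR facts
  have hE1 : 1 ≤ EE d k := one_le_EE d k hd (by omega)
  have hE1R : (1:ℝ) ≤ ((EE d k : ℕ) : ℝ) := by exact_mod_cast hE1
  have hEK : ((EE d k : ℕ) : ℝ) ≤ Kq := by
    have h1 : EE d k ≤ k * (r + 1) :=
      (EE_le d k).trans (Nat.mul_le_mul_left k (by
        have := RR_le d k
        omega))
    have h2 : k * (r + 1) ≤ 2 * r * (k + 1) := by
      have h3 : k ≤ r * k := Nat.le_mul_of_pos_left k hr1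
      calc k * (r + 1) = r * k + k := by ring
        _ ≤ r * k + r * k := Nat.add_le_add_left h3 _
        _ = 2 * r * k := by ring
        _ ≤ 2 * r * (k + 1) := Nat.mul_le_mul_left _ (by omega)
    have h4 : EE d k ≤ 2 * r * (k + 1) := h1.trans h2
    rw [hKqdef]
    push_cast
    exact_mod_cast h4
  have hEδ : ((EE d k : ℕ) : ℝ) * δ ≤ 1 := by
    rw [hδdef, mul_one_div, div_le_one hK0]
    exact hEK
  set ε' : ℝ := min (ε/2) (δ/2) with hε'def
  have hε'0 : 0 < ε' := lt_min (by linarith) (by linarith)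
  have hε'δ : ε' ≤ δ/2 := min_le_right _ _
  have hε'ε : ε' ≤ ε/2 := min_le_left _ _
  set β : ℝ := δ - ε' with hβdef
  have hβ0 : 0 < β := by rw [hβdef]; linarith
  -- constants
  set C1 : ℝ := ((RR d k).factorial : ℝ) + 1 with hC1def
  set C3 : ℝ := ((k * d * 2^d : ℕ) : ℝ) + 1 with hC3def
  set C4 : ℝ := ((k * d * 3^d : ℕ) : ℝ) + 1 with hC4def
  have hC1one : 1 ≤ C1 := by
    rw [hC1def]
    have := Nat.cast_nonneg (α := ℝ) ((RR d k).factorial)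
    linarith
  have hC3one : 1 ≤ C3 := by
    rw [hC3def]
    have := Nat.cast_nonneg (α := ℝ) (k * d * 2^d)
    linarith
  have hC4one : 1 ≤ C4 := by
    rw [hC4def]
    have := Nat.cast_nonneg (α := ℝ) (k * d * 3^d)
    linarith
  refine ⟨max 3 (max (C1 ^ (1/ε' : ℝ)) (max (C3 ^ (1/(1/2:ℝ) : ℝ)) (C4 ^ (1/(ε/2) : ℝ)))), ?_⟩
  intro m h hm3 hh1 hT F hFdeg hFunit a ha0 ha1
  have hm2 : 2 ≤ m := by omega
  have hm0 : (0:ℝ) < (m:ℝ) := by exact_mod_cast (by omega : 0 < m)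
  have hm1 : (1:ℝ) ≤ (m:ℝ) := by exact_mod_cast (by omega : 1 ≤ m)
  have hh0 : (0:ℝ) < (h:ℝ) := by exact_mod_cast (by omega : 0 < h)
  set L : ℝ := (m:ℝ) / (h:ℝ) with hLdef
  have hL3 : (3:ℝ) ≤ L := le_trans (le_max_left _ _) hT
  have hL1 : (1:ℝ) ≤ L := by linarith only [hL3]
  have hL0 : (0:ℝ) < L := by linarith only [hL1]
  have hLm : L ≤ (m:ℝ) := by
    rw [hLdef]
    exact div_le_self hm0.le (by exact_mod_cast hh1)
  -- transfer the T-components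
  have hTC1 : C1 ≤ (m:ℝ) ^ (ε' : ℝ) :=
    le_rpow_of_rpow_le hC1one hε'0
      (le_trans (le_trans (le_max_left _ _) (le_max_right _ _)) (hT.trans hLm))
  have hTC3 : C3 ≤ L ^ (1/2 : ℝ) :=
    le_rpow_of_rpow_le hC3one (by norm_num)
      (le_trans (le_trans (le_trans (le_max_left _ _) (le_max_right _ _))
        (le_max_right _ _)) hT)
  have hTC4 : C4 ≤ (m:ℝ) ^ (ε/2 : ℝ) :=
    le_rpow_of_rpow_le hC4one (by linarith)
      (le_trans (le_trans (le_trans (le_max_right _ _) (le_max_right _ _))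
        (le_max_right _ _)) (hT.trans hLm))
  -- the block side length
  set l : ℕ := ⌈(m:ℝ) ^ β⌉₊ with hldef
  have hmβ1 : (1:ℝ) ≤ (m:ℝ) ^ β := Real.one_le_rpow hm1 hβ0.le
  have hmβ0 : (0:ℝ) < (m:ℝ) ^ β := by linarith only [hmβ1]
  have hl1 : 1 ≤ l := by
    rw [hldef]
    exact Nat.one_le_ceil_iff.mpr hmβ0
  have hllb : (m:ℝ) ^ β ≤ (l:ℝ) := Nat.le_ceil _
  have hlub : (l:ℝ) - 1 ≤ (m:ℝ) ^ β := by
    have h0 := Nat.ceil_lt_add_one (le_of_lt hmβ0)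
    rw [hldef]
    linarith only [h0]
  set M : ℕ := ⌊L⌋₊ with hMdef
  have hML : (M:ℝ) ≤ L := Nat.floor_le hL0.le
  set le' : ℕ := min l (M + 1) with hle'def
  have hle'1 : 1 ≤ le' := le_min hl1 (by omega)
  have hle'l : le' ≤ l := min_le_left _ _
  clear_value r Kq δ ε' β C1 C3 C4 L l M le'
  -- hsmall
  have hsmall : ((RR d k).factorial : ℤ) * ((le' : ℤ) - 1) ^ (EE d k) < (m : ℤ) := by
    have h1 : ((le' : ℤ) - 1) = ((le' - 1 : ℕ) : ℤ) := by omega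
    rw [h1]
    have h2 : (((RR d k).factorial * (le' - 1)^(EE d k) : ℕ) : ℝ) < (m:ℝ) := by
      push_cast
      have h3 : ((le' - 1 : ℕ) : ℝ) ≤ (m:ℝ) ^ β := by
        have h4 : ((le' - 1 : ℕ) : ℝ) ≤ ((l - 1 : ℕ) : ℝ) := by
          exact_mod_cast Nat.sub_le_sub_right hle'l 1
        have h5 : ((l - 1 : ℕ) : ℝ) = (l:ℝ) - 1 := by
          push_cast [hl1]
          ring
        rw [h5] at h4
        linarith only [h4, hlub]
      have h6 : ((le' - 1 : ℕ) : ℝ) ^ (EE d k) ≤ ((m:ℝ) ^ β) ^ (EE d k) :=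
        pow_le_pow_left₀ (by positivity) h3 _
      have h7 : ((m:ℝ) ^ β) ^ (EE d k) = (m:ℝ) ^ (β * (EE d k : ℕ)) := by
        rw [← Real.rpow_natCast ((m:ℝ) ^ β) (EE d k), ← Real.rpow_mul hm0.le]
      have h8 : β * ((EE d k : ℕ) : ℝ) ≤ 1 - ε' := by
        have h9 : ε' * (((EE d k : ℕ) : ℝ) - 1) ≥ 0 :=
          mul_nonneg hε'0.le (by linarith only [hE1R])
        have hexp : β * ((EE d k : ℕ) : ℝ)
            = ((EE d k : ℕ) : ℝ) * δ - ε' * (((EE d k : ℕ) : ℝ) - 1) - ε' := by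
          rw [hβdef]
          ring
        rw [hexp]
        linarith only [hEδ, h9]
      have h11 : (m:ℝ) ^ (β * (EE d k : ℕ)) ≤ (m:ℝ) ^ (1 - ε') :=
        Real.rpow_le_rpow_of_exponent_le hm1 h8
      have h12 : ((RR d k).factorial : ℝ) ≤ (m:ℝ) ^ (ε' : ℝ) - 1 := by
        rw [hC1def] at hTC1
        linarith only [hTC1]
      have h13 : (0:ℝ) < (m:ℝ) ^ (1 - ε') := Real.rpow_pos_of_pos hm0 _
      calc ((RR d k).factorial : ℝ) * ((le' - 1 : ℕ) : ℝ) ^ (EE d k)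
          ≤ ((m:ℝ) ^ (ε' : ℝ) - 1) * (m:ℝ) ^ (1 - ε') := by
            refine mul_le_mul h12 (h6.trans (by rw [h7]; exact h11)) (by positivity) ?_
            have h14 : (1:ℝ) ≤ (m:ℝ) ^ (ε' : ℝ) := Real.one_le_rpow hm1 hε'0.le
            linarith only [h14]
        _ = (m:ℝ) ^ (ε' + (1 - ε')) - (m:ℝ) ^ (1 - ε') := by
            rw [Real.rpow_add hm0]
            ring
        _ < (m:ℝ) := by
            rw [show ε' + (1 - ε') = 1 by ring, Real.rpow_one]
            linarith only [h13]
    exact_mod_cast h2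
  obtain ⟨σ, -, hσu⟩ := hFunit
  have hFdeg' : F.totalDegree ≤ k := le_of_eq hFdeg
  set ci : Fin d → ℤ := fun i => ⌈(m:ℝ) * a i⌉ with hcidef
  have hMZ : ((M : ℤ)) = ⌊L⌋ := by
    rw [hMdef, ← Int.floor_toNat, Int.toNat_of_nonneg (Int.floor_nonneg.mpr hL0.le)]
  have hmem : ∀ x : Fin d → ℤ,
      (∀ i, (x i : ℝ) / (m : ℝ) ∈ Set.Icc (a i) (a i + 1 / (h : ℝ))) →
      ∀ i, ci i ≤ x i ∧ x i ≤ ci i + (M : ℤ) := by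
    intro x hx i
    obtain ⟨hx1, hx2⟩ := hx i
    have hb1 : (m:ℝ) * a i ≤ ((x i : ℤ) : ℝ) := by
      have h1 := (le_div_iff₀ hm0).mp hx1
      linarith only [h1]
    have hb2 : ((x i : ℤ) : ℝ) ≤ (m:ℝ) * a i + L := by
      have h1 := (div_le_iff₀ hm0).mp hx2
      have h2 : (a i + 1/(h:ℝ)) * m = (m:ℝ) * a i + (m:ℝ)/(h:ℝ) := by
        field_simp
      rw [h2] at h1
      rw [hLdef]
      linarith only [h1]
    constructor
    · exact Int.ceil_le.mpr hb1
    · have h4 : ((ci i : ℤ):ℝ) ≥ (m:ℝ) * a i := by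
        simp only [hcidef]
        exact Int.le_ceil _
      have h3 : ((x i - ci i : ℤ) : ℝ) ≤ L := by
        push_cast
        linarith only [hb2, h4]
      have h5 : x i - ci i ≤ ⌊L⌋ := Int.le_floor.mpr h3
      omega
  set S : Finset (Fin d → ℤ) :=
    (Fintype.piFinset fun i => Finset.Icc (ci i) (ci i + (M:ℤ))).filter
      (fun x => (∀ i, (x i : ℝ) / (m : ℝ) ∈ Set.Icc (a i) (a i + 1 / (h : ℝ))) ∧
        MvPolynomial.eval (fun i => ((x i : ℤ) : ZMod m)) F = 0) with hSdef
  have hcount : (Nat.card {x : Fin d → ℤ //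
      (∀ i, (x i : ℝ) / (m : ℝ) ∈ Set.Icc (a i) (a i + 1 / (h : ℝ))) ∧
      MvPolynomial.eval (fun i => ((x i : ℤ) : ZMod m)) F = 0}) ≤ S.card := by
    have h1 : {x : Fin d → ℤ |
        (∀ i, (x i : ℝ) / (m : ℝ) ∈ Set.Icc (a i) (a i + 1 / (h : ℝ))) ∧
        MvPolynomial.eval (fun i => ((x i : ℤ) : ZMod m)) F = 0} ⊆ ↑S := by
      intro x hx
      simp only [Set.mem_setOf_eq] at hx
      rw [hSdef]
      rw [Finset.mem_coe, Finset.mem_filter]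
      refine ⟨Fintype.mem_piFinset.mpr fun i => Finset.mem_Icc.mpr (hmem x hx.1 i), hx⟩
    calc Nat.card {x : Fin d → ℤ |
          (∀ i, (x i : ℝ) / (m : ℝ) ∈ Set.Icc (a i) (a i + 1 / (h : ℝ))) ∧
          MvPolynomial.eval (fun i => ((x i : ℤ) : ZMod m)) F = 0}
        = Set.ncard {x : Fin d → ℤ |
          (∀ i, (x i : ℝ) / (m : ℝ) ∈ Set.Icc (a i) (a i + 1 / (h : ℝ))) ∧
          MvPolynomial.eval (fun i => ((x i : ℤ) : ZMod m)) F = 0} :=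
          Nat.card_coe_set_eq _
      _ ≤ Set.ncard (↑S : Set (Fin d → ℤ)) := Set.ncard_le_ncard h1 S.finite_toSet
      _ = S.card := Set.ncard_coe_finset S
  have hblock := block_count d k m hm2 le' hle'1 F hFdeg' σ hσu hsmall ci M S
      (fun x hx i => by
        have h1 := (Finset.mem_filter.mp hx).1
        exact Finset.mem_Icc.mp (Fintype.mem_piFinset.mp h1 i))
      (fun x hx => (Finset.mem_filter.mp hx).2.2)
  have hN : ((Nat.card {x : Fin d → ℤ //
      (∀ i, (x i : ℝ) / (m : ℝ) ∈ Set.Icc (a i) (a i + 1 / (h : ℝ))) ∧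
      MvPolynomial.eval (fun i => ((x i : ℤ) : ZMod m)) F = 0} : ℕ) : ℝ)
      ≤ (((M / le' + 1 : ℕ) : ℝ)) ^ d * (((k * d : ℕ) : ℝ) * ((le' : ℕ) : ℝ) ^ (d - 1)) := by
    have h1 := le_trans hcount hblock
    exact_mod_cast h1
  have hkq : (k:ℝ)/Kq = (k:ℝ) * δ := by
    rw [hδdef]
    ring
  have hRHS2pos : (0:ℝ) ≤ (m : ℝ) ^ ((d : ℝ) - δ + ε) * (h : ℝ) ^ (-(d : ℝ) + ε) := by
    positivity
  have hRHS1pos : (0:ℝ) ≤ L ^ ((d : ℝ) - (k : ℝ) / Kq + ε) := by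
    positivity
  rcases le_or_gt (M+1) l with hca | hcb
  · -- single block case
    have hle'eq : le' = M + 1 := by rw [hle'def]; exact min_eq_right hca
    have hdiv : M / le' = 0 := by rw [hle'eq]; exact Nat.div_eq_of_lt (Nat.lt_succ_self M)
    rw [hdiv, hle'eq] at hN
    have hM1 : ((M + 1 : ℕ) : ℝ) ≤ 2 * L := by
      push_cast
      linarith only [hML, hL1]
    have hstep : ((M + 1 : ℕ) : ℝ) ^ (d-1) ≤ (2*L) ^ (d-1) :=
      pow_le_pow_left₀ (by positivity) hM1 _
    have hconst : ((k * d : ℕ) : ℝ) * (2:ℝ) ^ (d-1) ≤ C3 := by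
      rw [hC3def]
      push_cast
      have h1 : (2:ℝ) ^ (d-1) ≤ (2:ℝ) ^ d := pow_le_pow_right₀ (by norm_num) (Nat.sub_le d 1)
      have hkd : (0:ℝ) ≤ (k:ℝ)*(d:ℝ) := by positivity
      have h2 : (k:ℝ)*(d:ℝ)*2^(d-1) ≤ (k:ℝ)*(d:ℝ)*2^d := by
        rw [mul_assoc, mul_assoc]
        exact mul_le_mul_of_nonneg_left (mul_le_mul_of_nonneg_left h1 (Nat.cast_nonneg d)) (Nat.cast_nonneg k)
      linarith only [h2]
    have hchain : ((Nat.card {x : Fin d → ℤ //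
        (∀ i, (x i : ℝ) / (m : ℝ) ∈ Set.Icc (a i) (a i + 1 / (h : ℝ))) ∧
        MvPolynomial.eval (fun i => ((x i : ℤ) : ZMod m)) F = 0} : ℕ) : ℝ)
        ≤ L ^ ((d : ℝ) - (k : ℝ) / Kq + ε) := by
      have hLd1 : (0:ℝ) ≤ L ^ (d-1) := by positivity
      calc ((Nat.card {x : Fin d → ℤ //
          (∀ i, (x i : ℝ) / (m : ℝ) ∈ Set.Icc (a i) (a i + 1 / (h : ℝ))) ∧
          MvPolynomial.eval (fun i => ((x i : ℤ) : ZMod m)) F = 0} : ℕ) : ℝ)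
          ≤ (((0 + 1 : ℕ) : ℝ)) ^ d * (((k * d : ℕ) : ℝ) * ((M + 1 : ℕ) : ℝ) ^ (d - 1)) := hN
        _ = ((k * d : ℕ) : ℝ) * ((M + 1 : ℕ) : ℝ) ^ (d - 1) := by norm_num
        _ ≤ ((k * d : ℕ) : ℝ) * ((2*L) ^ (d-1)) := by
            refine mul_le_mul_of_nonneg_left hstep (by positivity)
        _ = (((k * d : ℕ) : ℝ) * (2:ℝ)^(d-1)) * L ^ (d-1) := by
            rw [mul_pow]
            ring
        _ ≤ C3 * L ^ (d-1) := mul_le_mul_of_nonneg_right hconst hLd1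
        _ ≤ L ^ (1/2 : ℝ) * L ^ (d-1) := mul_le_mul_of_nonneg_right hTC3 hLd1
        _ = L ^ ((1/2 : ℝ) + ((d-1 : ℕ) : ℝ)) := by
            rw [Real.rpow_add hL0, Real.rpow_natCast]
        _ ≤ L ^ ((d : ℝ) - (k : ℝ) / Kq + ε) := by
            refine Real.rpow_le_rpow_of_exponent_le hL1 ?_
            rw [hkq]
            have hdc : ((d - 1 : ℕ) : ℝ) = (d:ℝ) - 1 := by
              rw [Nat.cast_sub hd]
              norm_num
            rw [hdc]
            linarith only [hkδ, hε]
    exact le_trans hchain (le_add_of_nonneg_right hRHS2pos)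
  · -- many blocks case
    have hle'eq : le' = l := by rw [hle'def]; exact min_eq_left hcb.le
    rw [hle'eq] at hN
    have hl0R : (0:ℝ) < (l:ℝ) := by exact_mod_cast hl1
    have hl2L : (l:ℝ) ≤ 2 * L := by
      have h1 : (l:ℝ) ≤ (M:ℝ) + 1 := by exact_mod_cast hcb.le
      linarith only [h1, hML, hL1]
    have hNB : ((M / l + 1 : ℕ) : ℝ) ≤ 3 * L / (l:ℝ) := by
      have h1 : ((M / l : ℕ) : ℝ) ≤ (M:ℝ)/(l:ℝ) := Nat.cast_div_le
      have h2 : (M:ℝ)/(l:ℝ) ≤ L/(l:ℝ) := (div_le_div_iff_of_pos_right hl0R).mpr hML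
      have h3 : (1:ℝ) ≤ 2*L/(l:ℝ) := (one_le_div hl0R).mpr hl2L
      have h4 : 3*L/(l:ℝ) = L/(l:ℝ) + 2*L/(l:ℝ) := by ring
      push_cast
      rw [h4]
      push_cast at h1
      linarith only [h1, h2, h3]
    have hld : (l:ℝ)^d = (l:ℝ)^(d-1) * (l:ℝ) := by
      rw [← pow_succ]
      congr 1
      exact (Nat.succ_pred_eq_of_pos hd).symm
    have hident : (3*L/(l:ℝ))^d * (((k*d : ℕ):ℝ) * (l:ℝ)^(d-1))
        = (((k*d : ℕ):ℝ) * 3^d) * L^d / (l:ℝ) := by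
      rw [div_pow, mul_pow, hld]
      field_simp
    have hconst4 : (((k*d : ℕ):ℝ) * 3^d) ≤ (m:ℝ) ^ (ε - ε') := by
      have h6 : (m:ℝ)^(ε/2 : ℝ) ≤ (m:ℝ)^(ε-ε') :=
        Real.rpow_le_rpow_of_exponent_le hm1 (by linarith only [hε'ε])
      have h7 : (((k*d : ℕ):ℝ) * 3^d) ≤ C4 := by
        rw [hC4def]
        push_cast
        linarith only []
      linarith only [hTC4, h6, h7]
    have hLdpos : (0:ℝ) ≤ L ^ d := by positivity
    have hmain : ((Nat.card {x : Fin d → ℤ //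
        (∀ i, (x i : ℝ) / (m : ℝ) ∈ Set.Icc (a i) (a i + 1 / (h : ℝ))) ∧
        MvPolynomial.eval (fun i => ((x i : ℤ) : ZMod m)) F = 0} : ℕ) : ℝ)
        ≤ L^d * (m:ℝ) ^ (-δ + ε) := by
      calc ((Nat.card {x : Fin d → ℤ //
          (∀ i, (x i : ℝ) / (m : ℝ) ∈ Set.Icc (a i) (a i + 1 / (h : ℝ))) ∧
          MvPolynomial.eval (fun i => ((x i : ℤ) : ZMod m)) F = 0} : ℕ) : ℝ)
          ≤ (((M / l + 1 : ℕ) : ℝ)) ^ d * (((k * d : ℕ) : ℝ) * ((l : ℕ) : ℝ) ^ (d - 1)) := hN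
        _ ≤ (3 * L / (l:ℝ)) ^ d * (((k * d : ℕ) : ℝ) * ((l : ℕ) : ℝ) ^ (d - 1)) := by
            refine mul_le_mul_of_nonneg_right (pow_le_pow_left₀ (by positivity) hNB _) ?_
            positivity
        _ = (((k*d : ℕ):ℝ) * 3^d) * L^d / (l:ℝ) := hident
        _ ≤ (((k*d : ℕ):ℝ) * 3^d) * L^d / (m:ℝ)^β := by
            refine div_le_div_of_nonneg_left ?_ hmβ0 hllb
            positivity
        _ ≤ ((m:ℝ)^(ε-ε')) * L^d / (m:ℝ)^β :=
            (div_le_div_iff_of_pos_right hmβ0).mpr (mul_le_mul_of_nonneg_right hconst4 hLdpos)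
        _ = L^d * (m:ℝ) ^ (-δ + ε) := by
            rw [show ((m:ℝ)^(ε-ε')) * L^d / (m:ℝ)^β
              = L^d * ((m:ℝ)^(ε-ε') / (m:ℝ)^β) by ring]
            rw [← Real.rpow_sub hm0]
            rw [show ε - ε' - β = -δ + ε by rw [hβdef]; ring]
    have hfinal : L^d * (m:ℝ) ^ (-δ + ε)
        ≤ (m : ℝ) ^ ((d : ℝ) - δ + ε) * (h : ℝ) ^ (-(d : ℝ) + ε) := by
      have hLd : L^d = (m:ℝ)^((d : ℕ):ℝ) * (h:ℝ)^(-((d : ℕ):ℝ)) := by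
        rw [hLdef, div_pow, ← Real.rpow_natCast (m:ℝ) d, ← Real.rpow_natCast (h:ℝ) d,
          Real.rpow_neg hh0.le, div_eq_mul_inv]
      have hhε : (1:ℝ) ≤ (h:ℝ)^(ε:ℝ) :=
        Real.one_le_rpow (by exact_mod_cast hh1) hε.le
      have hsplit : (m : ℝ) ^ ((d : ℝ) - δ + ε) * (h : ℝ) ^ (-(d : ℝ) + ε)
          = ((m:ℝ)^((d:ℝ)) * (m:ℝ)^(-δ+ε)) * ((h:ℝ)^(-(d:ℝ)) * (h:ℝ)^(ε:ℝ)) := by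
        rw [← Real.rpow_add hm0, ← Real.rpow_add hh0]
        ring_nf
      rw [hsplit, hLd]
      have hm' : (0:ℝ) ≤ (m:ℝ)^((d:ℕ):ℝ) := by positivity
      have hh' : (0:ℝ) ≤ (h:ℝ)^(-((d:ℕ):ℝ)) := by positivity
      have hmδ : (0:ℝ) ≤ (m:ℝ)^(-δ+ε) := by positivity
      calc (m:ℝ)^((d : ℕ):ℝ) * (h:ℝ)^(-((d : ℕ):ℝ)) * (m:ℝ)^(-δ+ε)
          ≤ (m:ℝ)^((d : ℕ):ℝ) * (h:ℝ)^(-((d : ℕ):ℝ)) * (m:ℝ)^(-δ+ε) * (h:ℝ)^(ε:ℝ) :=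
            le_mul_of_one_le_right (mul_nonneg (mul_nonneg hm' hh') hmδ) hhε
        _ = ((m:ℝ)^((d:ℝ)) * (m:ℝ)^(-δ+ε)) * ((h:ℝ)^(-(d:ℝ)) * (h:ℝ)^(ε:ℝ)) := by
            push_cast
            ring
      
    exact le_trans (le_trans hmain hfinal) (le_add_of_nonneg_left hRHS1pos)
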